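/- Let U, V ⊆ ℝ^n be open, F : U → ℝ^p and G : V → ℝ^p differentiable maps, φ : U → V a lipeomorphism such that F ≈_x G via φ at a point x ∈ U, and let d : ℝ^n → ℝ^n be a pseudo-Lipschitz derivative of φ at x. Then d(ker D_xF) = ker D_{φ(x)}G, where D_xF denotes the total derivative of F at x. -/

import Mathlib

open Filter Set Metric Topology Asymptotics

noncomputable section

set_option synthInstance.maxHeartbeats 1000000
set_option maxHeartbeats 1600000

/-- `ℝ^n` with the Euclidean structure. -/
abbrev Eucl (n : ℕ) : Type := EuclideanSpace ℝ (Fin n)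

variable {V W : Type*} [NormedAddCommGroup V] [NormedSpace ℝ V]
  [NormedAddCommGroup W] [NormedSpace ℝ W]

/-- `F` admits the `α`-derivative `H` at `x`:  `H` is continuous and for every direction `v`,
`F (x + t v) - F x = t ^ α • H v + o(t ^ α)` as `t → 0⁺`. -/
def HasAlphaDerivAt (F : V → W) (x : V) (α : ℝ) (H : V → W) : Prop :=
  Continuous H ∧ ∀ v : V,
    Tendsto (fun t : ℝ => (t ^ α)⁻¹ • (F (x + t • v) - F x - t ^ α • H v))
      (𝓝[>] (0 : ℝ)) (𝓝 0)

/-- `F` has order `α` at `x`: for every nonzero direction `v` the limit of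
`F (x + t v) / t ^ α` as `t → 0⁺` exists, and for at least one `v` it is nonzero. -/
def HasOrderAt (F : V → W) (x : V) (α : ℝ) : Prop :=
  (∀ v : V, v ≠ 0 → ∃ L : W,
      Tendsto (fun t : ℝ => (t ^ α)⁻¹ • F (x + t • v)) (𝓝[>] (0 : ℝ)) (𝓝 L)) ∧
  ∃ v : V, v ≠ 0 ∧ ∃ L : W, L ≠ 0 ∧
      Tendsto (fun t : ℝ => (t ^ α)⁻¹ • F (x + t • v)) (𝓝[>] (0 : ℝ)) (𝓝 L)

/-- `φ` is a lipeomorphism from `U` onto `V'`. -/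
def IsLipeoOn (φ : V → W) (U : Set V) (V' : Set W) : Prop :=
  Set.BijOn φ U V' ∧ ∃ c : ℝ, 1 ≤ c ∧ ∀ x ∈ U, ∀ y ∈ U,
    (1 / c) * ‖x - y‖ ≤ ‖φ x - φ y‖ ∧ ‖φ x - φ y‖ ≤ c * ‖x - y‖

/-- `d` is a pseudo-Lipschitz derivative of `φ` at `x`: along some sequence `t_j → 0⁺`,
`(φ (x + t_j v) - φ x) / t_j → d v` uniformly on compact sets. -/
def IsPseudoLipDerivAt (φ : V → V) (x : V) (d : V → V) : Prop :=
  ∃ t : ℕ → ℝ, (∀ j, 0 < t j) ∧ Tendsto t atTop (𝓝 (0 : ℝ)) ∧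
    ∀ K : Set V, IsCompact K →
      TendstoUniformlyOn (fun j v => (t j)⁻¹ • (φ (x + t j • v) - φ x)) d atTop K

/-- `F ∼ G` at `x₀`: asymptotic equivalence of `F` and `G` at `x₀`. -/
def AsympEquivAt (F G : V → W) (x₀ : V) : Prop :=
  ∃ c₁ c₂ : ℝ, 0 < c₁ ∧ 0 < c₂ ∧
    ∀ᶠ x in 𝓝 x₀, c₂ * ‖F x‖ ≤ ‖G x‖ ∧ ‖G x‖ ≤ c₁ * ‖F x‖

/-- `F ≈ G` at `x₀` via the lipeomorphism `φ`. -/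
def AsympLipEquivAtVia {V' : Type*} [NormedAddCommGroup V'] [NormedSpace ℝ V']
    (F : V → W) (G : V' → W) (φ : V → V') (x₀ : V) : Prop :=
  ∃ c : ℝ, 1 ≤ c ∧ ∀ᶠ x in 𝓝 x₀,
    (1 / c) * ‖F x - F x₀‖ ≤ ‖G (φ x) - G (φ x₀)‖ ∧
      ‖G (φ x) - G (φ x₀)‖ ≤ c * ‖F x - F x₀‖

/-- The degree-`m` term of the Taylor series of `F` at `0`; for a `C^∞` germ of
finite order `m` this is its initial part `in(F)`. -/
def inPart (F : V → ℝ) (m : ℕ) : V → ℝ :=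
  fun x => (m.factorial : ℝ)⁻¹ • iteratedFDeriv ℝ m F 0 (fun _ => x)


private lemma slope_tendsto_of_hasFDerivAt
    {E F' : Type*} [NormedAddCommGroup E] [NormedSpace ℝ E]
    [NormedAddCommGroup F'] [NormedSpace ℝ F']
    {G : E → F'} {q : E} {B : E →L[ℝ] F'} (hG : HasFDerivAt G B q)
    {u : ℕ → E} {t : ℕ → ℝ} {L : E}
    (ht0 : ∀ j, 0 < t j) (htz : Tendsto t atTop (𝓝 0))
    (hu : Tendsto (fun j => (t j)⁻¹ • (u j - q)) atTop (𝓝 L)) :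
    Tendsto (fun j => (t j)⁻¹ • (G (u j) - G q)) atTop (𝓝 (B L)) := by
  have hne : ∀ j, t j ≠ 0 := fun j => (ht0 j).ne'
  have huq : Tendsto (fun j => u j - q) atTop (𝓝 0) := by
    have h := htz.smul hu
    simp only [zero_smul] at h
    refine h.congr fun j => ?_
    exact smul_inv_smul₀ (hne j) _
  have hq : Tendsto u atTop (𝓝 q) := by
    have := huq.add (tendsto_const_nhds (x := q))
    simpa using this
  have ho := hG.isLittleO.comp_tendsto hq
  have hO : (fun j => u j - q) =O[atTop] t := by
    rw [Asymptotics.isBigO_iff]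
    refine ⟨‖L‖ + 1, ?_⟩
    have hb : ∀ᶠ j in atTop, ‖(t j)⁻¹ • (u j - q)‖ < ‖L‖ + 1 :=
      hu.norm.eventually_lt_const (lt_add_one _)
    filter_upwards [hb] with j hj
    have h1 : ‖u j - q‖ = t j * ‖(t j)⁻¹ • (u j - q)‖ := by
      rw [norm_smul, Real.norm_eq_abs, abs_of_pos (inv_pos.2 (ht0 j)),
        ← mul_assoc, mul_inv_cancel₀ (hne j), one_mul]
    rw [h1, Real.norm_eq_abs, abs_of_pos (ht0 j)]
    nlinarith [ht0 j, norm_nonneg ((t j)⁻¹ • (u j - q))]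
  have ho2 := ho.trans_isBigO hO
  have herr : Tendsto (fun j => (t j)⁻¹ • (G (u j) - G q - B (u j - q))) atTop (𝓝 0) := by
    rw [NormedAddCommGroup.tendsto_nhds_zero]
    intro ε hε
    filter_upwards [ho2.def (half_pos hε)] with j hj
    rw [Real.norm_eq_abs, abs_of_pos (ht0 j)] at hj
    rw [norm_smul, Real.norm_eq_abs, abs_of_pos (inv_pos.2 (ht0 j))]
    calc (t j)⁻¹ * ‖G (u j) - G q - B (u j - q)‖ ≤ (t j)⁻¹ * (ε / 2 * t j) := by
          gcongr
          · exact (inv_pos.2 (ht0 j)).le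
          · simpa using hj
      _ = ε / 2 := by rw [mul_comm (ε/2) (t j), ← mul_assoc, inv_mul_cancel₀ (hne j), one_mul]
      _ < ε := by linarith
  have hB : Tendsto (fun j => B ((t j)⁻¹ • (u j - q))) atTop (𝓝 (B L)) :=
    (B.continuous.tendsto L).comp hu
  have hsum := herr.add hB
  rw [zero_add] at hsum
  refine hsum.congr fun j => ?_
  rw [map_smul, ← smul_add]
  congr 1
  abel

/-- if `F ≈_x G` via a lipeomorphism `φ` and `d` is a pseudo-Lipschitz
derivative of `φ` at `x`, then `d (ker D_x F) = ker D_{φ(x)} G`. -/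
theorem image_ker_fderiv_of_asympLipEquiv {n p : ℕ}
    (U V : Set (Eucl n)) (hU : IsOpen U) (hV : IsOpen V)
    (F G : Eucl n → Eucl p)
    (hF : ∀ y ∈ U, DifferentiableAt ℝ F y) (hG : ∀ y ∈ V, DifferentiableAt ℝ G y)
    (φ : Eucl n → Eucl n) (hφ : IsLipeoOn φ U V)
    (x : Eucl n) (hx : x ∈ U)
    (hequiv : AsympLipEquivAtVia F G φ x)
    (d : Eucl n → Eucl n) (hd : IsPseudoLipDerivAt φ x d) :
    d '' (LinearMap.ker (fderiv ℝ F x : Eucl n →ₗ[ℝ] Eucl p) : Set (Eucl n)) =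
      (LinearMap.ker (fderiv ℝ G (φ x) : Eucl n →ₗ[ℝ] Eucl p) : Set (Eucl n)) := by
  classical
  obtain ⟨c, hc1, hev⟩ := hequiv
  obtain ⟨hbij, c', hc'1, hlip⟩ := hφ
  obtain ⟨t, ht0, htz, hunif⟩ := hd
  have hne : ∀ j, t j ≠ 0 := fun j => (ht0 j).ne'
  have hc0 : (0:ℝ) < c := lt_of_lt_of_le one_pos hc1
  have hc'0 : (0:ℝ) < c' := lt_of_lt_of_le one_pos hc'1
  have hφx : φ x ∈ V := hbij.mapsTo hx
  have hFd : HasFDerivAt F (fderiv ℝ F x) x := (hF x hx).hasFDerivAt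
  have hGd : HasFDerivAt G (fderiv ℝ G (φ x)) (φ x) := (hG (φ x) hφx).hasFDerivAt
  set A := fderiv ℝ F x with hA
  set B := fderiv ℝ G (φ x) with hB
  -- pointwise convergence of the difference quotients of φ
  have hdpt : ∀ v : Eucl n,
      Tendsto (fun j => (t j)⁻¹ • (φ (x + t j • v) - φ x)) atTop (𝓝 (d v)) := fun v =>
    (hunif {v} isCompact_singleton).tendsto_at (mem_singleton v)
  -- key inequalities at the level of derivatives
  have key : ∀ v : Eucl n, (1 / c) * ‖A v‖ ≤ ‖B (d v)‖ ∧ ‖B (d v)‖ ≤ c * ‖A v‖ := by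
    intro v
    have hFs : Tendsto (fun j => (t j)⁻¹ • (F (x + t j • v) - F x)) atTop (𝓝 (A v)) := by
      refine slope_tendsto_of_hasFDerivAt hFd ht0 htz ?_
      have hconst : ∀ j, (t j)⁻¹ • ((x + t j • v) - x) = v := by
        intro j; rw [add_sub_cancel_left, inv_smul_smul₀ (hne j)]
      exact tendsto_const_nhds.congr fun j => (hconst j).symm
    have hGs : Tendsto (fun j => (t j)⁻¹ • (G (φ (x + t j • v)) - G (φ x))) atTop
        (𝓝 (B (d v))) :=
      slope_tendsto_of_hasFDerivAt hGd ht0 htz (hdpt v)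
    have hxj : Tendsto (fun j => x + t j • v) atTop (𝓝 x) := by
      have h1 : Tendsto (fun j => t j • v) atTop (𝓝 ((0:ℝ) • v)) := htz.smul_const v
      rw [zero_smul] at h1
      simpa using tendsto_const_nhds.add h1
    have hevj : ∀ᶠ j in atTop,
        (1 / c) * ‖F (x + t j • v) - F x‖ ≤ ‖G (φ (x + t j • v)) - G (φ x)‖ ∧
        ‖G (φ (x + t j • v)) - G (φ x)‖ ≤ c * ‖F (x + t j • v) - F x‖ := hxj.eventually hev
    constructor
    · refine le_of_tendsto_of_tendsto (tendsto_const_nhds.mul hFs.norm) hGs.norm ?_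
      filter_upwards [hevj] with j hj
      simp only [norm_smul, Real.norm_eq_abs, abs_of_pos (inv_pos.2 (ht0 j))]
      calc (1 / c) * ((t j)⁻¹ * ‖F (x + t j • v) - F x‖)
          = (t j)⁻¹ * ((1 / c) * ‖F (x + t j • v) - F x‖) := by ring
        _ ≤ (t j)⁻¹ * ‖G (φ (x + t j • v)) - G (φ x)‖ := by
            have := hj.1
            gcongr
            exact (inv_pos.2 (ht0 j)).le
    · refine le_of_tendsto_of_tendsto hGs.norm (tendsto_const_nhds.mul hFs.norm) ?_
      filter_upwards [hevj] with j hj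
      simp only [norm_smul, Real.norm_eq_abs, abs_of_pos (inv_pos.2 (ht0 j))]
      calc (t j)⁻¹ * ‖G (φ (x + t j • v)) - G (φ x)‖
          ≤ (t j)⁻¹ * (c * ‖F (x + t j • v) - F x‖) := by
            have := hj.2
            gcongr
            exact (inv_pos.2 (ht0 j)).le
        _ = c * ((t j)⁻¹ * ‖F (x + t j • v) - F x‖) := by ring
  have hker : ∀ v : Eucl n, A v = 0 ↔ B (d v) = 0 := by
    intro v
    obtain ⟨h1, h2⟩ := key v
    constructor
    · intro h
      rw [h, norm_zero, mul_zero] at h2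
      exact norm_le_zero_iff.1 h2
    · intro h
      rw [h, norm_zero] at h1
      have h3 : ‖A v‖ ≤ 0 := by
        have h4 : 0 < 1 / c := by positivity
        nlinarith [norm_nonneg (A v)]
      exact norm_le_zero_iff.1 h3
  -- surjectivity of d
  have hsurj : ∀ w : Eucl n, ∃ v : Eucl n, d v = w := by
    intro w
    obtain ⟨s, hs0, hsV⟩ := Metric.isOpen_iff.1 hV (φ x) hφx
    obtain ⟨ρ, hρ0, hρU⟩ := Metric.isOpen_iff.1 hU x hx
    set R : ℝ := c' * ‖w‖ + 1 with hR
    have hR0 : 0 < R := by nlinarith [norm_nonneg w]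
    set Good : ℕ → Prop := fun j => t j * (‖w‖ + 1) < s ∧ t j * R < ρ with hGood
    have hgood : ∀ᶠ j in atTop, Good j := by
      have h1 : Tendsto (fun j => t j * (‖w‖ + 1)) atTop (𝓝 0) := by
        simpa using htz.mul_const (‖w‖ + 1)
      have h2 : Tendsto (fun j => t j * R) atTop (𝓝 0) := by
        simpa using htz.mul_const R
      filter_upwards [h1.eventually_lt_const hs0, h2.eventually_lt_const hρ0] with j ha hb
      exact ⟨ha, hb⟩
    set y : ℕ → Eucl n := fun j => φ x + t j • w with hy
    have hyV : ∀ j, Good j → y j ∈ V := by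
      intro j hj
      apply hsV
      rw [mem_ball, dist_eq_norm, hy]
      simp only [add_sub_cancel_left, norm_smul, Real.norm_eq_abs, abs_of_pos (ht0 j)]
      nlinarith [ht0 j, norm_nonneg w, hj.1]
    have hz : ∀ j, ∃ z : Eucl n, y j ∈ V → z ∈ U ∧ φ z = y j := by
      intro j
      by_cases h : y j ∈ V
      · obtain ⟨z, hzU, hzφ⟩ := hbij.surjOn h
        exact ⟨z, fun _ => ⟨hzU, hzφ⟩⟩
      · exact ⟨x, fun h' => absurd h' h⟩
    choose z hzspec using hz
    set v : ℕ → Eucl n := fun j => if Good j then (t j)⁻¹ • (z j - x) else 0 with hv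
    have hznorm : ∀ j, Good j → ‖z j - x‖ ≤ c' * (t j * ‖w‖) := by
      intro j hj
      obtain ⟨hzU, hzφ⟩ := hzspec j (hyV j hj)
      have hl := (hlip (z j) hzU x hx).1
      rw [hzφ] at hl
      have hyn : ‖y j - φ x‖ = t j * ‖w‖ := by
        rw [hy]
        simp [norm_smul, abs_of_pos (ht0 j)]
      rw [hyn] at hl
      calc ‖z j - x‖ = c' * (1 / c' * ‖z j - x‖) := by field_simp
        _ ≤ c' * (t j * ‖w‖) := mul_le_mul_of_nonneg_left hl hc'0.le
    have hvgood : ∀ j, Good j → v j = (t j)⁻¹ • (z j - x) := by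
      intro j hj
      simp only [hv]
      rw [if_pos hj]
    have hvK : ∀ j, v j ∈ closedBall (0 : Eucl n) R := by
      intro j
      rw [mem_closedBall, dist_zero_right]
      by_cases hj : Good j
      · rw [hvgood j hj, norm_smul, Real.norm_eq_abs, abs_of_pos (inv_pos.2 (ht0 j))]
        have h1 := hznorm j hj
        have h2 : (t j)⁻¹ * ‖z j - x‖ ≤ (t j)⁻¹ * (c' * (t j * ‖w‖)) := by
          gcongr
          exact (inv_pos.2 (ht0 j)).le
        have h3 : (t j)⁻¹ * (c' * (t j * ‖w‖)) = c' * ‖w‖ := by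
          rw [show (t j)⁻¹ * (c' * (t j * ‖w‖)) = (c' * ‖w‖) * ((t j)⁻¹ * t j) from by ring,
            inv_mul_cancel₀ (hne j), mul_one]
        rw [h3] at h2
        rw [hR]
        linarith
      · have hvj : v j = 0 := by
          simp only [hv]
          rw [if_neg hj]
        rw [hvj, norm_zero]
        exact hR0.le
    have hwj : ∀ j, Good j → (t j)⁻¹ • (φ (x + t j • v j) - φ x) = w := by
      intro j hj
      obtain ⟨hzU, hzφ⟩ := hzspec j (hyV j hj)
      have h1 : x + t j • v j = z j := by
        rw [hvgood j hj, smul_inv_smul₀ (hne j)]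
        abel
      rw [h1, hzφ, hy]
      simp only [add_sub_cancel_left]
      rw [inv_smul_smul₀ (hne j)]
    have hKc : IsCompact (closedBall (0 : Eucl n) R) := isCompact_closedBall _ _
    have hKU := hunif _ hKc
    -- continuity of d on the closed ball
    have hφcont : ContinuousOn φ U := by
      have hl : LipschitzOnWith (Real.toNNReal c') φ U := by
        apply LipschitzOnWith.of_dist_le_mul
        intro a ha b hb
        rw [dist_eq_norm, dist_eq_norm, Real.coe_toNNReal c' hc'0.le]
        exact (hlip a ha b hb).2
      exact hl.continuousOn
    have hdcont : ContinuousOn d (closedBall (0 : Eucl n) R) := by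
      apply hKU.continuousOn
      refine Eventually.frequently ?_
      filter_upwards [hgood] with j hj
      apply ContinuousOn.fun_const_smul
      apply ContinuousOn.sub _ continuousOn_const
      apply hφcont.comp
      · exact (continuous_const.add (continuous_id.const_smul (t j))).continuousOn
      · intro u hu
        apply hρU
        rw [mem_ball, dist_eq_norm, add_sub_cancel_left, norm_smul, Real.norm_eq_abs,
          abs_of_pos (ht0 j)]
        rw [mem_closedBall, dist_zero_right] at hu
        have := hj.2
        nlinarith [ht0 j]
    have hdv : Tendsto (fun j => d (v j)) atTop (𝓝 w) := by
      rw [Metric.tendsto_nhds]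
      intro ε hε
      filter_upwards [hgood, (Metric.tendstoUniformlyOn_iff.1 hKU) ε hε] with j hj hj2
      have h1 := hj2 (v j) (hvK j)
      rw [hwj j hj] at h1
      exact h1
    obtain ⟨vlim, hvlim, ψ, hψ, hψt⟩ := hKc.tendsto_subseq hvK
    refine ⟨vlim, ?_⟩
    have h1 : Tendsto (fun j => d (v (ψ j))) atTop (𝓝 (d vlim)) := by
      have hcw : ContinuousWithinAt d (closedBall (0 : Eucl n) R) vlim := hdcont vlim hvlim
      refine hcw.tendsto.comp ?_
      exact tendsto_nhdsWithin_of_tendsto_nhds_of_eventually_within _ hψt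
        (Eventually.of_forall fun j => hvK (ψ j))
    have h2 : Tendsto (fun j => d (v (ψ j))) atTop (𝓝 w) := hdv.comp hψ.tendsto_atTop
    exact tendsto_nhds_unique h1 h2
  -- conclusion
  ext w
  simp only [mem_image, SetLike.mem_coe, LinearMap.mem_ker]
  constructor
  · rintro ⟨v, hv, rfl⟩
    exact (hker v).1 hv
  · intro hw
    obtain ⟨v, rfl⟩ := hsurj w
    exact ⟨v, (hker v).2 hw, rfl⟩
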